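/- Fix an integer N ≥ 1, a positive integer K, real constants C1 and Csync, and a symmetric matrix J : Fin N → Fin N → ℝ. Let F : ℝ → ℝ be differentiable and even, set S = −F′, and define E(φ) = −(K·C1/2)·Σ_{i} Σ_{j ≠ i} J i j · F(φ i − φ j) − Csync·Σ_i cos(K·φ i) and V i (φ) = −C1·Σ_{j ≠ i} J i j · S(φ i − φ j) − Csync·sin(K·φ i). If φ : ℝ → (Fin N → ℝ) is differentiable and satisfies the oscillator dynamics (φ i)′(t) = V i (φ(t)) for all t and all i, then for every t the derivative of t ↦ E(φ(t)) exists and equals −K·Σ_i ((φ i)′(t))², which is ≤ 0. -/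

import Mathlib

/-- along any trajectory of the oscillator dynamics, the derivative of
`t ↦ E(φ(t))` exists and equals `−K·Σ_i ((φ i)′(t))²`, which is `≤ 0`. -/
theorem stmt_1 (N : ℕ) (hN : 1 ≤ N) (K : ℕ) (hK : 0 < K) (C1 Csync : ℝ)
    (J : Fin N → Fin N → ℝ) (hJ : ∀ i j, J i j = J j i)
    (F : ℝ → ℝ) (hF : Differentiable ℝ F) (hFeven : ∀ x, F (-x) = F x)
    (S : ℝ → ℝ) (hS : ∀ x, S x = -(deriv F x))
    (E : (Fin N → ℝ) → ℝ)
    (hE : ∀ φ : Fin N → ℝ, E φ =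
      -((K : ℝ) * C1 / 2) * ∑ a, ∑ b ∈ Finset.univ.erase a, J a b * F (φ a - φ b)
        - Csync * ∑ a, Real.cos ((K : ℝ) * φ a))
    (V : Fin N → (Fin N → ℝ) → ℝ)
    (hV : ∀ (i : Fin N) (ψ : Fin N → ℝ), V i ψ =
      -C1 * ∑ j ∈ Finset.univ.erase i, J i j * S (ψ i - ψ j)
        - Csync * Real.sin ((K : ℝ) * ψ i))
    (φ : ℝ → Fin N → ℝ) (hφ : Differentiable ℝ φ)
    (hdyn : ∀ (t : ℝ) (i : Fin N), deriv (fun s => φ s i) t = V i (φ t))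
    (t : ℝ) :
    HasDerivAt (fun s => E (φ s))
      (-(K : ℝ) * ∑ i, (deriv (fun s => φ s i) t) ^ 2) t ∧
    -(K : ℝ) * ∑ i, (deriv (fun s => φ s i) t) ^ 2 ≤ 0 := by

  classical
  set f := deriv F with hf
  -- f is odd (derivative of an even function)
  have hodd : ∀ x : ℝ, f (-x) = - f x := by
    intro x
    have h1 : HasDerivAt (fun y : ℝ => F (-y)) (f (-x) * (-1)) x :=
      (hF (-x)).hasDerivAt.comp x (hasDerivAt_neg x)
    have h2 : (fun y : ℝ => F (-y)) = F := funext hFeven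
    rw [h2] at h1
    have h3 : f x = f (-x) * (-1) := h1.deriv.symm ▸ rfl
    linarith [h3]
  have hf0 : f 0 = 0 := by
    have := hodd 0; simp only [neg_zero] at this; linarith
  -- pointwise derivatives of the coordinates
  set d : Fin N → ℝ := fun i => deriv (fun s => φ s i) t with hdd
  have hcomp : ∀ i : Fin N, HasDerivAt (fun s => φ s i) (d i) t := by
    intro i
    exact (differentiableAt_pi.mp (hφ t) i).hasDerivAt
  -- the candidate derivative
  set P : Fin N → Fin N → ℝ := fun a b => J a b * f (φ t a - φ t b) with hP
  have hPdiag : ∀ a, P a a = 0 := by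
    intro a; simp [hP, hf0]
  have hPskew : ∀ a b, P b a = - P a b := by
    intro a b
    have : φ t b - φ t a = -(φ t a - φ t b) := by ring
    simp only [hP, this, hodd, hJ a b]
    ring
  -- derivative of each summand
  have hterm : ∀ a b : Fin N, HasDerivAt (fun s => J a b * F (φ s a - φ s b))
      (J a b * (f (φ t a - φ t b) * (d a - d b))) t := by
    intro a b
    exact (((hF (φ t a - φ t b)).hasDerivAt.comp t ((hcomp a).sub (hcomp b)))).const_mul (J a b)
  have hcos : ∀ a : Fin N, HasDerivAt (fun s => Real.cos ((K : ℝ) * φ s a))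
      (-Real.sin ((K : ℝ) * φ t a) * ((K : ℝ) * d a)) t := by
    intro a
    exact (Real.hasDerivAt_cos _).comp t ((hcomp a).const_mul (K : ℝ))
  have hsum1 : HasDerivAt
      (fun s => ∑ a, ∑ b ∈ Finset.univ.erase a, J a b * F (φ s a - φ s b))
      (∑ a, ∑ b ∈ Finset.univ.erase a, J a b * (f (φ t a - φ t b) * (d a - d b))) t :=
    HasDerivAt.fun_sum fun a _ => HasDerivAt.fun_sum fun b _ => hterm a b
  have hsum2 : HasDerivAt (fun s => ∑ a, Real.cos ((K : ℝ) * φ s a))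
      (∑ a, -Real.sin ((K : ℝ) * φ t a) * ((K : ℝ) * d a)) t :=
    HasDerivAt.fun_sum fun a _ => hcos a
  have hEeq : (fun s => E (φ s)) = fun s =>
      -((K : ℝ) * C1 / 2) * ∑ a, ∑ b ∈ Finset.univ.erase a, J a b * F (φ s a - φ s b)
        - Csync * ∑ a, Real.cos ((K : ℝ) * φ s a) := funext fun s => hE (φ s)
  have hD : HasDerivAt (fun s => E (φ s))
      (-((K : ℝ) * C1 / 2) * (∑ a, ∑ b ∈ Finset.univ.erase a,
          J a b * (f (φ t a - φ t b) * (d a - d b)))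
        - Csync * ∑ a, -Real.sin ((K : ℝ) * φ t a) * ((K : ℝ) * d a)) t := by
    rw [hEeq]
    exact (hsum1.const_mul _).sub (hsum2.const_mul Csync)
  -- algebraic identity for the derivative value
  have herase : ∀ (g : Fin N → Fin N → ℝ), (∀ a, g a a = 0) →
      ∀ a : Fin N, ∑ b ∈ Finset.univ.erase a, g a b = ∑ b, g a b := by
    intro g hg a
    simpa using Finset.sum_erase Finset.univ (hg a)
  have hkey : (∑ a, ∑ b ∈ Finset.univ.erase a, J a b * (f (φ t a - φ t b) * (d a - d b)))
      = 2 * ∑ a, d a * ∑ b, P a b := by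
    have h1 : ∀ a : Fin N, (∑ b ∈ Finset.univ.erase a, J a b * (f (φ t a - φ t b) * (d a - d b)))
        = ∑ b, P a b * (d a - d b) := by
      intro a
      rw [herase (fun a b => J a b * (f (φ t a - φ t b) * (d a - d b)))
        (fun a => by simp) a]
      exact Finset.sum_congr rfl fun b _ => by rw [hP]; ring
    simp only [h1]
    have h2 : (∑ a, ∑ b, P a b * (d a - d b))
        = (∑ a, ∑ b, P a b * d a) - (∑ a, ∑ b, P a b * d b) := by
      rw [← Finset.sum_sub_distrib]
      refine Finset.sum_congr rfl fun a _ => ?_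
      rw [← Finset.sum_sub_distrib]
      exact Finset.sum_congr rfl fun b _ => by ring
    have h3 : (∑ a, ∑ b, P a b * d b) = - ∑ a, ∑ b, P a b * d a := by
      rw [Finset.sum_comm, ← Finset.sum_neg_distrib]
      refine Finset.sum_congr rfl fun b _ => ?_
      rw [← Finset.sum_neg_distrib]
      refine Finset.sum_congr rfl fun a _ => ?_
      rw [hPskew b a]; ring
    rw [h2, h3, sub_neg_eq_add, ← two_mul]
    congr 1
    refine Finset.sum_congr rfl fun a _ => ?_
    rw [Finset.mul_sum]
    exact Finset.sum_congr rfl fun b _ => by ring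
  have hval : -((K : ℝ) * C1 / 2) * (∑ a, ∑ b ∈ Finset.univ.erase a,
          J a b * (f (φ t a - φ t b) * (d a - d b)))
        - Csync * ∑ a, -Real.sin ((K : ℝ) * φ t a) * ((K : ℝ) * d a)
      = -(K : ℝ) * ∑ i, (d i) ^ 2 := by
    rw [hkey]
    have hdi : ∀ i : Fin N, d i = C1 * (∑ b, P i b) - Csync * Real.sin ((K : ℝ) * φ t i) := by
      intro i
      have h4 : d i = V i (φ t) := hdyn t i
      rw [h4, hV]
      have h5 : (∑ j ∈ Finset.univ.erase i, J i j * S (φ t i - φ t j)) = - ∑ b, P i b := by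
        rw [herase (fun a b => J a b * S (φ t a - φ t b))
          (fun a => by simp [hS, hf0]) i, ← Finset.sum_neg_distrib]
        exact Finset.sum_congr rfl fun b _ => by rw [hS, hP, hf]; ring
      rw [h5]; ring
    have h6 : ∀ i : Fin N, (d i) ^ 2
        = d i * (C1 * (∑ b, P i b) - Csync * Real.sin ((K : ℝ) * φ t i)) := by
      intro i; rw [← hdi i]; ring
    simp only [h6]
    have hA : ∀ X : ℝ, -((K : ℝ) * C1 / 2) * (2 * X) = (-((K : ℝ) * C1)) * X := fun X => by ring
    have hL : -((K : ℝ) * C1 / 2) * (2 * ∑ a, d a * ∑ b, P a b)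
        - Csync * ∑ a, -Real.sin ((K : ℝ) * φ t a) * ((K : ℝ) * d a)
        = ∑ i, -(K : ℝ) * (d i * (C1 * (∑ b, P i b) - Csync * Real.sin ((K : ℝ) * φ t i))) := by
      rw [hA, Finset.mul_sum, Finset.mul_sum, ← Finset.sum_sub_distrib]
      exact Finset.sum_congr rfl fun i _ => by ring
    rw [hL, Finset.mul_sum]
  have hderiv_eq : ∀ i : Fin N, deriv (fun s => φ s i) t = d i := fun i => rfl
  constructor
  · have : -(K : ℝ) * ∑ i, (deriv (fun s => φ s i) t) ^ 2 = -(K : ℝ) * ∑ i, (d i) ^ 2 := rfl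
    rw [this, ← hval]
    exact hD
  · have hKpos : (0 : ℝ) ≤ (K : ℝ) := Nat.cast_nonneg K
    have : (0 : ℝ) ≤ ∑ i, (deriv (fun s => φ s i) t) ^ 2 :=
      Finset.sum_nonneg fun i _ => sq_nonneg _
    nlinarith
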